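/- Parameter-shift rule for Zeno circuits: let the Zeno-augmented evolution be 𝒰_Z(θ) containing N_r repetitions of e^{−i(θ_r/N_r)H_r} interleaved with a fixed channel 𝒫, where H_r is Hermitian and unitary (H_r² = I). Then ∂/∂θ_r Tr[M 𝒰_Z(θ)ρ𝒰_Z†(θ)] = (1/N_r) Σ_{k=1}^{N_r} [Tr(M 𝒰_Z^{+(r,k)} ρ 𝒰_Z^{†,+(r,k)}) − Tr(M 𝒰_Z^{−(r,k)} ρ 𝒰_Z^{†,−(r,k)})], where 𝒰_Z^{±(r,k)} is 𝒰_Z with the k-th occurrence of the θ_r-evolution shifted in angle by ±π/(4N_r)·2 (i.e., the standard π/2 shift applied to the effective half-angle). -/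

import Mathlib

open scoped Matrix
open Complex

set_option maxHeartbeats 1000000
noncomputable section
namespace ZenoAux
variable {d : ℕ}

def U (H : Matrix (Fin d) (Fin d) ℂ) (a : ℝ) : Matrix (Fin d) (Fin d) ℂ :=
  NormedSpace.exp (((-(a:ℂ)) * Complex.I) • H)

lemma expU (H : Matrix (Fin d) (Fin d) ℂ) (hH2 : H * H = 1) (a : ℝ) :
    U H a = (Real.cos a : ℂ) • (1 : Matrix (Fin d) (Fin d) ℂ)
        - ((Real.sin a : ℂ) * Complex.I) • H := by
  show NormedSpace.exp (((-(a:ℂ)) * Complex.I) • H) = _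
  have hHe : ∀ k : ℕ, H ^ (2 * k) = 1 := by
    intro k; rw [pow_mul, sq, hH2, one_pow]
  have hHo : ∀ k : ℕ, H ^ (2 * k + 1) = H := by
    intro k; rw [pow_succ, hHe, one_mul]
  set c : ℂ := (-(a:ℂ)) * Complex.I with hc
  have hcsq : c ^ 2 = -((a:ℂ)^2) := by rw [hc, mul_pow, Complex.I_sq]; ring
  have hc2 : ∀ k : ℕ, c ^ (2 * k) = (-1) ^ k * (a:ℂ) ^ (2 * k) := by
    intro k
    rw [pow_mul, pow_mul, hcsq, neg_pow]
  have heven : HasSum (fun k : ℕ => ((Nat.factorial (2*k) : ℂ)⁻¹) • (c • H) ^ (2*k))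
      ((Real.cos a : ℂ) • (1 : Matrix (Fin d) (Fin d) ℂ)) := by
    have := (Complex.hasSum_cos (a:ℂ)).smul_const (1 : Matrix (Fin d) (Fin d) ℂ)
    rw [show Complex.cos (a:ℂ) = ((Real.cos a : ℂ)) by rw [Complex.ofReal_cos]] at this
    convert this using 2 with k
    rw [smul_pow, hHe, hc2, smul_smul]
    congr 1
    field_simp
  have hodd : HasSum (fun k : ℕ => ((Nat.factorial (2*k+1) : ℂ)⁻¹) • (c • H) ^ (2*k+1))
      (-(((Real.sin a : ℂ) * Complex.I)) • H) := by
    have := ((Complex.hasSum_sin (a:ℂ)).mul_left (-Complex.I)).smul_const H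
    rw [show Complex.sin (a:ℂ) = ((Real.sin a : ℂ)) by rw [Complex.ofReal_sin]] at this
    have h2 : (-Complex.I * (Real.sin a : ℂ)) • H = (-(((Real.sin a : ℂ)) * Complex.I)) • H := by
      ring_nf
    rw [h2] at this
    convert this using 2 with k
    rw [smul_pow, hHo, pow_succ, hc2, hc, smul_smul]
    congr 1
    field_simp
    ring
  have key : HasSum (fun n : ℕ => ((Nat.factorial n : ℂ)⁻¹) • (c • H) ^ n)
      ((Real.cos a : ℂ) • (1 : Matrix (Fin d) (Fin d) ℂ)
        + (-(((Real.sin a : ℂ)) * Complex.I)) • H) := by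
    refine HasSum.even_add_odd ?_ ?_
    · exact heven
    · exact hodd
  rw [NormedSpace.exp_eq_tsum ℂ]
  beta_reduce
  rw [key.tsum_eq, neg_smul]
  abel

lemma U_conjT (H : Matrix (Fin d) (Fin d) ℂ) (hH : H.IsHermitian) (hH2 : H * H = 1) (a : ℝ) :
    (U H a)ᴴ = (Real.cos a : ℂ) • (1 : Matrix (Fin d) (Fin d) ℂ)
        + ((Real.sin a : ℂ) * Complex.I) • H := by
  rw [expU H hH2]
  rw [Matrix.conjTranspose_sub, Matrix.conjTranspose_smul, Matrix.conjTranspose_smul,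
    Matrix.conjTranspose_one, hH.eq]
  simp [← Complex.ofReal_cos, ← Complex.ofReal_sin, Complex.conj_ofReal, sub_neg_eq_add]

lemma conj_eq (H : Matrix (Fin d) (Fin d) ℂ) (hH : H.IsHermitian) (hH2 : H * H = 1)
    (a : ℝ) (m : Matrix (Fin d) (Fin d) ℂ) :
    U H a * m * (U H a)ᴴ
      = ((Real.cos a : ℂ)^2) • m
        + ((Real.cos a : ℂ) * (Real.sin a : ℂ) * Complex.I) • (m * H - H * m)
        + ((Real.sin a : ℂ)^2) • (H * m * H) := by
  rw [U_conjT H hH hH2, expU H hH2]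
  simp only [Matrix.sub_mul, Matrix.add_mul, Matrix.mul_add, Matrix.mul_sub,
    Matrix.smul_mul, Matrix.mul_smul, Matrix.one_mul, Matrix.mul_one, smul_smul,
    smul_sub, smul_add, ← Complex.ofReal_cos, ← Complex.ofReal_sin]
  match_scalars <;> simp only [← Complex.ofReal_sin, ← Complex.ofReal_cos] <;>
    (try ring)
  all_goals linear_combination (-((Real.sin a:ℂ)^2)) * Complex.I_sq


variable (H : Matrix (Fin d) (Fin d) ℂ) (Pc : Matrix (Fin d) (Fin d) ℂ →ₗ[ℂ] Matrix (Fin d) (Fin d) ℂ)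

/-- `m ↦ Pc (U a * m * (U a)ᴴ)` as a linear map. -/
def stepL (a : ℝ) : Matrix (Fin d) (Fin d) ℂ →ₗ[ℂ] Matrix (Fin d) (Fin d) ℂ :=
  Pc ∘ₗ LinearMap.mulRight ℂ (U H a)ᴴ ∘ₗ LinearMap.mulLeft ℂ (U H a)

def Q1 : Matrix (Fin d) (Fin d) ℂ →ₗ[ℂ] Matrix (Fin d) (Fin d) ℂ := Pc

def Q2 : Matrix (Fin d) (Fin d) ℂ →ₗ[ℂ] Matrix (Fin d) (Fin d) ℂ :=
  Pc ∘ₗ (LinearMap.mulRight ℂ H - LinearMap.mulLeft ℂ H)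

def Q3 : Matrix (Fin d) (Fin d) ℂ →ₗ[ℂ] Matrix (Fin d) (Fin d) ℂ :=
  Pc ∘ₗ (LinearMap.mulRight ℂ H ∘ₗ LinearMap.mulLeft ℂ H)

lemma stepL_apply (hH : H.IsHermitian) (hH2 : H * H = 1) (a : ℝ)
    (m : Matrix (Fin d) (Fin d) ℂ) :
    stepL H Pc a m
      = ((Real.cos a : ℂ)^2) • Q1 Pc m
        + ((Real.cos a : ℂ) * (Real.sin a : ℂ) * Complex.I) • Q2 H Pc m
        + ((Real.sin a : ℂ)^2) • Q3 H Pc m := by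
  simp only [stepL, Q1, Q2, Q3, LinearMap.comp_apply, LinearMap.mulRight_apply,
    LinearMap.mulLeft_apply, LinearMap.sub_apply]
  rw [conj_eq H hH hH2 a m]
  simp only [map_add, map_smul, map_sub]

lemma scalar_step (hH : H.IsHermitian) (hH2 : H * H = 1)
    (L : Matrix (Fin d) (Fin d) ℂ →ₗ[ℂ] ℂ) (a : ℝ) (m : Matrix (Fin d) (Fin d) ℂ) :
    L (stepL H Pc a m)
      = ((Real.cos a : ℂ)^2) * L (Q1 Pc m)
        + ((Real.cos a : ℂ) * (Real.sin a : ℂ) * Complex.I) * L (Q2 H Pc m)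
        + ((Real.sin a : ℂ)^2) * L (Q3 H Pc m) := by
  rw [stepL_apply H Pc hH hH2 a m]
  simp [map_add, map_smul, smul_eq_mul]

lemma hasDerivAt_ofReal_cos (a : ℝ) :
    HasDerivAt (fun t : ℝ => ((Real.cos t : ℂ))) (-(Real.sin a : ℂ)) a := by
  have := Complex.ofRealCLM.hasFDerivAt.comp_hasDerivAt a (Real.hasDerivAt_cos a)
  simpa [Function.comp_def] using this

lemma hasDerivAt_ofReal_sin (a : ℝ) :
    HasDerivAt (fun t : ℝ => ((Real.sin t : ℂ))) ((Real.cos a : ℂ)) a := by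
  have := Complex.ofRealCLM.hasFDerivAt.comp_hasDerivAt a (Real.hasDerivAt_sin a)
  simpa [Function.comp_def] using this

lemma trig1 (x : ℝ) : Real.cos (x + Real.pi/4)^2 - Real.cos (x - Real.pi/4)^2
    = -(2 * Real.cos x * Real.sin x) := by
  have h : Real.sqrt 2 ^ 2 = 2 := Real.sq_sqrt (by norm_num)
  rw [Real.cos_add, Real.cos_sub, Real.cos_pi_div_four, Real.sin_pi_div_four]
  linear_combination (-(Real.cos x * Real.sin x)) * h

lemma trig2 (x : ℝ) : Real.cos (x + Real.pi/4) * Real.sin (x + Real.pi/4)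
    - Real.cos (x - Real.pi/4) * Real.sin (x - Real.pi/4)
    = Real.cos x^2 - Real.sin x^2 := by
  have h : Real.sqrt 2 ^ 2 = 2 := Real.sq_sqrt (by norm_num)
  rw [Real.cos_add, Real.cos_sub, Real.sin_add, Real.sin_sub,
    Real.cos_pi_div_four, Real.sin_pi_div_four]
  linear_combination ((Real.cos x^2 - Real.sin x^2)/2) * h

lemma trig3 (x : ℝ) : Real.sin (x + Real.pi/4)^2 - Real.sin (x - Real.pi/4)^2
    = 2 * Real.cos x * Real.sin x := by
  have h : Real.sqrt 2 ^ 2 = 2 := Real.sq_sqrt (by norm_num)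
  rw [Real.sin_add, Real.sin_sub, Real.cos_pi_div_four, Real.sin_pi_div_four]
  linear_combination (Real.cos x * Real.sin x) * h

lemma hasDerivAt_stepS (hH : H.IsHermitian) (hH2 : H * H = 1)
    (L : Matrix (Fin d) (Fin d) ℂ →ₗ[ℂ] ℂ)
    {g : ℝ → Matrix (Fin d) (Fin d) ℂ} {g' : Matrix (Fin d) (Fin d) ℂ} {t : ℝ}
    (hg : ∀ L' : Matrix (Fin d) (Fin d) ℂ →ₗ[ℂ] ℂ,
      HasDerivAt (fun s => L' (g s)) (L' g') t) :
    HasDerivAt (fun s => L (stepL H Pc s (g s)))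
      (L (stepL H Pc (t + Real.pi/4) (g t)) - L (stepL H Pc (t - Real.pi/4) (g t))
        + L (stepL H Pc t g')) t := by
  have hQ1 : HasDerivAt (fun s => L (Q1 Pc (g s))) (L (Q1 Pc g')) t := by
    simpa using hg (L ∘ₗ Q1 Pc)
  have hQ2 : HasDerivAt (fun s => L (Q2 H Pc (g s))) (L (Q2 H Pc g')) t := by
    simpa using hg (L ∘ₗ Q2 H Pc)
  have hQ3 : HasDerivAt (fun s => L (Q3 H Pc (g s))) (L (Q3 H Pc g')) t := by
    simpa using hg (L ∘ₗ Q3 H Pc)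
  have hc := hasDerivAt_ofReal_cos t
  have hs := hasDerivAt_ofReal_sin t
  have h1 := (hc.mul hc).mul hQ1
  have h2 := ((hc.mul hs).mul_const Complex.I).mul hQ2
  have h3 := (hs.mul hs).mul hQ3
  have big := (h1.add h2).add h3
  have heq : (fun s => L (stepL H Pc s (g s)))
      = fun s => ((Real.cos s : ℂ) * (Real.cos s : ℂ)) * L (Q1 Pc (g s))
        + ((Real.cos s : ℂ) * (Real.sin s : ℂ) * Complex.I) * L (Q2 H Pc (g s))
        + ((Real.sin s : ℂ) * (Real.sin s : ℂ)) * L (Q3 H Pc (g s)) := by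
    funext s; rw [scalar_step H Pc hH hH2 L s (g s)]; ring
  rw [heq]
  refine big.congr_deriv (Eq.symm ?_)
  simp only [Pi.mul_apply]
  rw [scalar_step H Pc hH hH2 L (t + Real.pi/4) (g t),
    scalar_step H Pc hH hH2 L (t - Real.pi/4) (g t),
    scalar_step H Pc hH hH2 L t g']
  have T1 : ((Real.cos (t + Real.pi/4) : ℂ))^2 - ((Real.cos (t - Real.pi/4) : ℂ))^2
      = -(2 * (Real.cos t : ℂ) * (Real.sin t : ℂ)) := by exact_mod_cast trig1 t
  have T2 : ((Real.cos (t + Real.pi/4) : ℂ)) * ((Real.sin (t + Real.pi/4) : ℂ))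
      - ((Real.cos (t - Real.pi/4) : ℂ)) * ((Real.sin (t - Real.pi/4) : ℂ))
      = (Real.cos t : ℂ)^2 - (Real.sin t : ℂ)^2 := by exact_mod_cast trig2 t
  have T3 : ((Real.sin (t + Real.pi/4) : ℂ))^2 - ((Real.sin (t - Real.pi/4) : ℂ))^2
      = 2 * (Real.cos t : ℂ) * (Real.sin t : ℂ) := by exact_mod_cast trig3 t
  linear_combination (L (Q1 Pc (g t))) * T1 + Complex.I * (L (Q2 H Pc (g t))) * T2
    + (L (Q3 H Pc (g t))) * T3


def E (n : ℕ) (ang : Fin n → ℝ) (σ : Matrix (Fin d) (Fin d) ℂ) : Matrix (Fin d) (Fin d) ℂ :=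
  Fin.foldl n (fun m j => stepL H Pc (ang j) m) σ

lemma E_succ (n : ℕ) (ang : Fin (n+1) → ℝ) (σ : Matrix (Fin d) (Fin d) ℂ) :
    E H Pc (n+1) ang σ
      = stepL H Pc (ang (Fin.last n)) (E H Pc n (fun j => ang j.castSucc) σ) := by
  rw [E, E, Fin.foldl_succ_last]

lemma main (hH : H.IsHermitian) (hH2 : H * H = 1) (n : ℕ) (t : ℝ)
    (σ : Matrix (Fin d) (Fin d) ℂ) (L : Matrix (Fin d) (Fin d) ℂ →ₗ[ℂ] ℂ) :
    HasDerivAt (fun s => L (E H Pc n (fun _ => s) σ))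
      (L (∑ k : Fin n,
        (E H Pc n (fun j => t + if j = k then Real.pi/4 else 0) σ
          - E H Pc n (fun j => t + if j = k then -(Real.pi/4) else 0) σ))) t := by
  induction n generalizing σ L with
  | zero =>
      simp only [E, Fin.foldl_zero, Finset.univ_eq_empty, Finset.sum_empty, map_zero]
      exact hasDerivAt_const t (L σ)
  | succ n ih =>
      set g : ℝ → Matrix (Fin d) (Fin d) ℂ := fun s => E H Pc n (fun _ => s) σ with hg
      set D : Matrix (Fin d) (Fin d) ℂ :=
        ∑ k : Fin n,
          (E H Pc n (fun j => t + if j = k then Real.pi/4 else 0) σ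
            - E H Pc n (fun j => t + if j = k then -(Real.pi/4) else 0) σ) with hD
      have hstep := hasDerivAt_stepS H Pc hH hH2 L (g := g) (g' := D) (t := t)
        (fun L' => ih σ L')
      have hfun : (fun s => L (E H Pc (n+1) (fun _ => s) σ))
          = fun s => L (stepL H Pc s (g s)) := by
        funext s
        rw [E_succ]
      rw [hfun]
      convert hstep using 1
      have hA : ∀ k : Fin n,
          E H Pc (n+1) (fun j => t + if j = Fin.castSucc k then Real.pi/4 else 0) σ
            = stepL H Pc t (E H Pc n (fun j => t + if j = k then Real.pi/4 else 0) σ) := by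
        intro k
        rw [E_succ]
        simp [(Fin.castSucc_lt_last k).ne', Fin.castSucc_inj]
      have hB : ∀ k : Fin n,
          E H Pc (n+1) (fun j => t + if j = Fin.castSucc k then -(Real.pi/4) else 0) σ
            = stepL H Pc t (E H Pc n (fun j => t + if j = k then -(Real.pi/4) else 0) σ) := by
        intro k
        rw [E_succ]
        simp [(Fin.castSucc_lt_last k).ne', Fin.castSucc_inj]
      have hlastA :
          E H Pc (n+1) (fun j => t + if j = Fin.last n then Real.pi/4 else 0) σ
            = stepL H Pc (t + Real.pi/4) (g t) := by
        rw [E_succ]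
        simp [hg, (Fin.castSucc_lt_last _).ne]
      have hlastB :
          E H Pc (n+1) (fun j => t + if j = Fin.last n then -(Real.pi/4) else 0) σ
            = stepL H Pc (t + -(Real.pi/4)) (g t) := by
        rw [E_succ]
        simp [hg, (Fin.castSucc_lt_last _).ne]
      rw [Fin.sum_univ_castSucc]
      simp only [hA, hB, hlastA, hlastB]
      rw [map_add, map_sum, map_sub]
      have : stepL H Pc t D = ∑ k : Fin n,
          (stepL H Pc t (E H Pc n (fun j => t + if j = k then Real.pi/4 else 0) σ)
            - stepL H Pc t (E H Pc n (fun j => t + if j = k then -(Real.pi/4) else 0) σ)) := by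
        rw [hD, map_sum]
        exact Finset.sum_congr rfl fun k _ => by rw [map_sub]
      rw [this, map_sum]
      have harg : (t + -(Real.pi/4)) = t - Real.pi/4 := by ring
      rw [harg]
      abel

end ZenoAux
end

/-- **Parameter-shift rule for Zeno circuits.** Let `𝒰_Z(θ)` consist of `N` repetitions of
`e^{-i(θ/N)H}` (with `H` Hermitian and unitary, `H² = I`) each followed by a fixed linear
channel `𝒫`, applied to a state `ρ`. Then the derivative of `θ ↦ Tr[M 𝒰_Z(θ)ρ𝒰_Z†(θ)]`
equals `(1/N) Σ_{k=1}^N [⟨M⟩₊ₖ − ⟨M⟩₋ₖ]`, where `⟨M⟩₊ₖ` (resp. `⟨M⟩₋ₖ`) is the same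
expectation with the `k`-th occurrence of the `θ`-evolution shifted in angle by `+π/4`
(resp. `-π/4`), i.e., the standard `π/2` shift applied to the effective half-angle. -/
theorem zeno_parameter_shift {d N : ℕ} (hN : 1 ≤ N)
    (H : Matrix (Fin d) (Fin d) ℂ) (hH : H.IsHermitian) (hH2 : H * H = 1)
    (Pc : Matrix (Fin d) (Fin d) ℂ →ₗ[ℂ] Matrix (Fin d) (Fin d) ℂ)
    (M ρ : Matrix (Fin d) (Fin d) ℂ) (hM : M.IsHermitian)
    (evolve : (Fin N → ℝ) → Matrix (Fin d) (Fin d) ℂ)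
    (hevolve : evolve = fun ang => Fin.foldl N
      (fun σ j =>
        Pc ((NormedSpace.exp (((-(ang j : ℂ)) * Complex.I) • H)) * σ *
          (NormedSpace.exp (((-(ang j : ℂ)) * Complex.I) • H))ᴴ))
      ρ)
    (θ : ℝ) :
    HasDerivAt (fun t : ℝ => (M * evolve fun _ => t / N).trace)
      ((1 / N : ℂ) * ∑ k : Fin N,
        ((M * evolve fun j => θ / N + if j = k then Real.pi / 4 else 0).trace -
         (M * evolve fun j => θ / N + if j = k then -(Real.pi / 4) else 0).trace))
      θ := by
  have hE : evolve = fun ang => ZenoAux.E H Pc N ang ρ := by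
    rw [hevolve]
    funext ang
    rw [ZenoAux.E]
    congr 1
  set Ltr : Matrix (Fin d) (Fin d) ℂ →ₗ[ℂ] ℂ :=
    (Matrix.traceLinearMap (Fin d) ℂ ℂ) ∘ₗ LinearMap.mulLeft ℂ M with hLtr
  have hLtr_apply : ∀ X : Matrix (Fin d) (Fin d) ℂ, Ltr X = (M * X).trace := fun X => rfl
  have h1 := ZenoAux.main H Pc hH hH2 N (θ/N) ρ Ltr
  have h2 : HasDerivAt (fun t : ℝ => t / N) ((1:ℝ)/N) θ := by
    simpa using (hasDerivAt_id θ).div_const (N : ℝ)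
  have h3 := h1.scomp θ h2
  have hfun : ((fun s => Ltr (ZenoAux.E H Pc N (fun _ => s) ρ)) ∘ fun t : ℝ => t / N)
      = fun t : ℝ => (M * evolve fun _ => t / N).trace := by
    funext t
    simp [Function.comp, hE, hLtr_apply]
  rw [hfun] at h3
  refine h3.congr_deriv (Eq.symm ?_)
  rw [hLtr_apply]
  simp only [hE, Complex.real_smul, Finset.mul_sum, Matrix.trace_sum, mul_sub,
    Matrix.trace_sub, Complex.ofReal_div, Complex.ofReal_one, Complex.ofReal_natCast]
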